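/- Let q be an odd prime power, v ≥ 1, n = 2^v, and t an integer with t ≢ 0 (mod 2^v) and qt ≡ t (mod 2^v). Then a Type-I duadic splitting of Z/2^vZ given by the translation τ_t: i ↦ i+t exists if and only if ν_2(t) < ν_2(q−1). -/

import Mathlib

/-- The 2-adic valuation of an integer, valued in `ℕ∞` (so that `ν₂(0) = ⊤`). -/
noncomputable def nu2 (m : ℤ) : ℕ∞ := emultiplicity 2 m

private lemma isUnit_cast_two_pow (w : ℤ) (hw : ¬ (2:ℤ) ∣ w) (k : ℕ) :
    IsUnit ((w : ZMod (2 ^ k))) := by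
  have hcop : IsCoprime ((2:ℤ) ^ k) w := (Int.prime_two.coprime_iff_not_dvd.mpr hw).pow_left
  obtain ⟨c, d, h⟩ := hcop
  have h2 : ((2:ZMod (2 ^ k)) ^ k) = 0 := by
    have := ZMod.natCast_self (2 ^ k)
    push_cast at this
    exact this
  have hcast := congrArg (fun z : ℤ => (z : ZMod (2 ^ k))) h
  push_cast at hcast
  rw [h2, mul_zero, zero_add] at hcast
  exact IsUnit.of_mul_eq_one _ (by rw [mul_comm]; exact hcast)

private lemma image_filter_self {α : Type*} [Fintype α] [DecidableEq α]
    (p : α → Prop) [DecidablePred p] (f : α → α) (hf : Function.Surjective f)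
    (h : ∀ x, p (f x) ↔ p x) :
    (Finset.univ.filter p).image f = Finset.univ.filter p := by
  ext y
  simp only [Finset.mem_image, Finset.mem_filter, Finset.mem_univ, true_and]
  constructor
  · rintro ⟨x, hx, rfl⟩
    exact (h x).mpr hx
  · intro hy
    obtain ⟨x, rfl⟩ := hf y
    exact ⟨x, (h x).mp hy, rfl⟩

private lemma image_filter_compl {α : Type*} [Fintype α] [DecidableEq α]
    (p : α → Prop) [DecidablePred p] (f : α → α) (hf : Function.Surjective f)
    (h : ∀ x, p (f x) ↔ ¬ p x) :
    (Finset.univ.filter p).image f = (Finset.univ.filter p)ᶜ := by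
  ext y
  simp only [Finset.mem_image, Finset.mem_filter, Finset.mem_univ, true_and,
    Finset.mem_compl]
  constructor
  · rintro ⟨x, hx, rfl⟩
    exact fun hpfx => (h x).mp hpfx hx
  · intro hy
    obtain ⟨x, rfl⟩ := hf y
    exact ⟨x, by_contra fun hnp => hy ((h x).mpr hnp), rfl⟩

/-- for `q` an odd prime power, `v ≥ 1` and `t` with `t ≢ 0 (mod 2^v)` and
`q·t ≡ t (mod 2^v)`, a Type-I duadic splitting of `ℤ/2^vℤ` given by the translation
`τ_t : i ↦ i + t` exists iff `ν₂(t) < ν₂(q−1)`. -/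
theorem stmt12 (q : ℕ) (hq : ∃ p k : ℕ, p.Prime ∧ 0 < k ∧ q = p ^ k) (hodd : Odd q)
    (v : ℕ) (hv : 1 ≤ v) (t : ℤ)
    (ht0 : ¬ ((2 : ℤ) ^ v ∣ t)) (hqt : (q : ℤ) * t ≡ t [ZMOD (2 ^ v : ℕ)]) :
    (∃ P : Finset (ZMod (2 ^ v)),
        P.image (fun i => (q : ZMod (2 ^ v)) * i) = P ∧
        P.image (fun i => i + (t : ZMod (2 ^ v))) = Pᶜ) ↔
    nu2 t < nu2 ((q : ℤ) - 1) := by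
  have htne : t ≠ 0 := fun h => ht0 (h ▸ dvd_zero _)
  have hq2 : 2 ≤ q := by
    obtain ⟨p, k, hp, hk, rfl⟩ := hq
    exact le_trans hp.two_le (Nat.le_self_pow hk.ne' p)
  have hq1ne : (q : ℤ) - 1 ≠ 0 := by
    have : (2 : ℤ) ≤ (q : ℤ) := by exact_mod_cast hq2
    omega
  have hfinT : FiniteMultiplicity 2 t :=
    Int.finiteMultiplicity_iff.mpr ⟨by norm_num, htne⟩
  have hfinQ : FiniteMultiplicity 2 ((q : ℤ) - 1) :=
    Int.finiteMultiplicity_iff.mpr ⟨by norm_num, hq1ne⟩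
  set a := multiplicity 2 t with ha
  set b := multiplicity 2 ((q : ℤ) - 1) with hb
  have hEa : nu2 t = (a : ℕ∞) := hfinT.emultiplicity_eq_multiplicity
  have hEb : nu2 ((q : ℤ) - 1) = (b : ℕ∞) := hfinQ.emultiplicity_eq_multiplicity
  rw [hEa, hEb, Nat.cast_lt]
  have hta : (2 : ℤ) ^ a ∣ t := hfinT.pow_dvd_iff_le_multiplicity.mpr le_rfl
  have hta1 : ¬ (2 : ℤ) ^ (a + 1) ∣ t :=
    hfinT.multiplicity_lt_iff_not_dvd.mp (lt_add_one a)
  have htb : (2 : ℤ) ^ b ∣ ((q : ℤ) - 1) := hfinQ.pow_dvd_iff_le_multiplicity.mpr le_rfl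
  have htb1 : ¬ (2 : ℤ) ^ (b + 1) ∣ ((q : ℤ) - 1) :=
    hfinQ.multiplicity_lt_iff_not_dvd.mp (lt_add_one b)
  have hav : a < v := by
    by_contra h
    push_neg at h
    exact ht0 ((pow_dvd_pow 2 h).trans hta)
  have hodd2 : ¬ (2 : ℤ) ∣ (q : ℤ) := by
    rintro ⟨c, hc⟩
    obtain ⟨m, hm⟩ := hodd
    rw [hm] at hc
    push_cast at hc
    omega
  have hqu : IsUnit ((q : ℕ) : ZMod (2 ^ v)) := by
    have := isUnit_cast_two_pow (q : ℤ) hodd2 v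
    rwa [Int.cast_natCast] at this
  constructor
  · -- splitting → a < b
    rintro ⟨P, h1, h2⟩
    by_contra hab
    push_neg at hab  -- b ≤ a
    obtain ⟨s, hs⟩ : (2 : ℤ) ^ b ∣ t := (pow_dvd_pow 2 hab).trans hta
    obtain ⟨w, hw⟩ := htb
    have hwodd : ¬ (2 : ℤ) ∣ w := by
      rintro ⟨c, hc⟩
      exact htb1 ⟨c, by rw [hw, hc]; ring⟩
    have hwu : IsUnit ((w : ZMod (2 ^ v))) := isUnit_cast_two_pow w hwodd v
    set x : ZMod (2 ^ v) := (s : ZMod (2 ^ v)) * ↑hwu.unit⁻¹ with hx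
    have hq' : (q : ZMod (2 ^ v)) - 1 = (2 : ZMod (2 ^ v)) ^ b * (w : ZMod (2 ^ v)) := by
      have : (((q : ℤ) - 1 : ℤ) : ZMod (2 ^ v)) = (((2 : ℤ) ^ b * w : ℤ) : ZMod (2 ^ v)) := by
        rw [hw]
      push_cast at this
      exact this
    have ht' : ((t : ℤ) : ZMod (2 ^ v)) = (2 : ZMod (2 ^ v)) ^ b * (s : ZMod (2 ^ v)) := by
      have : ((t : ℤ) : ZMod (2 ^ v)) = (((2 : ℤ) ^ b * s : ℤ) : ZMod (2 ^ v)) := by rw [hs]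
      push_cast at this
      exact this
    have hwinv : (w : ZMod (2 ^ v)) * ↑hwu.unit⁻¹ = 1 := hwu.mul_val_inv
    have hkey : (q : ZMod (2 ^ v)) * x = x + (t : ZMod (2 ^ v)) := by
      have step : ((q : ZMod (2 ^ v)) - 1) * x = (t : ZMod (2 ^ v)) := by
        rw [hq', ht', hx]
        calc (2 : ZMod (2 ^ v)) ^ b * (w : ZMod (2 ^ v)) * ((s : ZMod (2 ^ v)) * ↑hwu.unit⁻¹)
            = (2 : ZMod (2 ^ v)) ^ b * (s : ZMod (2 ^ v)) *
                ((w : ZMod (2 ^ v)) * ↑hwu.unit⁻¹) := by ring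
          _ = (2 : ZMod (2 ^ v)) ^ b * (s : ZMod (2 ^ v)) := by rw [hwinv, mul_one]
      have : (q : ZMod (2 ^ v)) * x = ((q : ZMod (2 ^ v)) - 1) * x + x := by ring
      rw [this, step]
      ring
    have hmul : ∀ y : ZMod (2 ^ v), (q : ZMod (2 ^ v)) * y ∈ P ↔ y ∈ P := by
      intro y
      constructor
      · intro hy
        rw [← h1] at hy
        obtain ⟨z, hz, hzy⟩ := Finset.mem_image.mp hy
        exact (hqu.mul_right_inj.mp hzy) ▸ hz
      · intro hy
        rw [← h1]
        exact Finset.mem_image_of_mem _ hy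
    have hadd : ∀ y : ZMod (2 ^ v), y + (t : ZMod (2 ^ v)) ∈ Pᶜ ↔ y ∈ P := by
      intro y
      rw [← h2]
      constructor
      · intro hy
        obtain ⟨z, hz, hzy⟩ := Finset.mem_image.mp hy
        exact (add_right_cancel hzy) ▸ hz
      · intro hy
        exact Finset.mem_image_of_mem _ hy
    by_cases hxP : x ∈ P
    · have h4 : x + (t : ZMod (2 ^ v)) ∈ Pᶜ := (hadd x).mpr hxP
      have h5 : (q : ZMod (2 ^ v)) * x ∈ P := (hmul x).mpr hxP
      rw [hkey] at h5
      exact (Finset.mem_compl.mp h4) h5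
    · have h4 : ¬ (x + (t : ZMod (2 ^ v)) ∈ Pᶜ) := fun h => hxP ((hadd x).mp h)
      rw [Finset.mem_compl, not_not] at h4
      rw [← hkey] at h4
      exact hxP ((hmul x).mp h4)
  · -- a < b → splitting
    intro hab
    have hdv : 2 ^ (a + 1) ∣ 2 ^ v := pow_dvd_pow 2 (by omega)
    haveI : NeZero (2 ^ (a + 1)) := ⟨by positivity⟩
    set cst : ZMod (2 ^ v) →+* ZMod (2 ^ (a + 1)) :=
      ZMod.castHom hdv (ZMod (2 ^ (a + 1))) with hcst
    have hq1 : ((q : ℕ) : ZMod (2 ^ (a + 1))) = 1 := by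
      have hd : (2 : ℤ) ^ (a + 1) ∣ (q : ℤ) - 1 :=
        (pow_dvd_pow 2 (by omega : a + 1 ≤ b)).trans htb
      have h0 : (((q : ℤ) - 1 : ℤ) : ZMod (2 ^ (a + 1))) = 0 := by
        rw [ZMod.intCast_zmod_eq_zero_iff_dvd]
        exact_mod_cast hd
      push_cast at h0
      exact sub_eq_zero.mp h0
    have ht2 : ((t : ℤ) : ZMod (2 ^ (a + 1))) = (2 : ZMod (2 ^ (a + 1))) ^ a := by
      obtain ⟨u, hu⟩ := hta
      have huodd : ¬ (2 : ℤ) ∣ u := by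
        rintro ⟨c, hc⟩
        exact hta1 ⟨c, by rw [hu, hc]; ring⟩
      have hd : (2 : ℤ) ^ (a + 1) ∣ t - 2 ^ a := by
        obtain ⟨m', hm'⟩ : (2 : ℤ) ∣ u - 1 := by
          rcases Int.even_or_odd u with he | ho
          · exact absurd he.two_dvd huodd
          · obtain ⟨c, hc⟩ := ho
            exact ⟨c, by omega⟩
        exact ⟨m', by rw [hu]; linear_combination (2 : ℤ) ^ a * hm'⟩
      have h0 : ((t - 2 ^ a : ℤ) : ZMod (2 ^ (a + 1))) = 0 := by
        rw [ZMod.intCast_zmod_eq_zero_iff_dvd]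
        exact_mod_cast hd
      push_cast at h0
      exact sub_eq_zero.mp h0
    refine ⟨Finset.univ.filter (fun x => (cst x).val < 2 ^ a), ?_, ?_⟩
    · -- multiplicative part
      apply image_filter_self
      · intro y
        refine ⟨↑hqu.unit⁻¹ * y, ?_⟩
        show (q : ZMod (2 ^ v)) * (↑hqu.unit⁻¹ * y) = y
        rw [← mul_assoc, hqu.mul_val_inv, one_mul]
      · intro x
        rw [map_mul, map_natCast cst q, hq1, one_mul]
    · -- additive part
      apply image_filter_compl
      · intro y
        exact ⟨y - (t : ZMod (2 ^ v)), sub_add_cancel y _⟩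
      · intro x
        rw [map_add, map_intCast cst t, ht2]
        have h2a : ((2 : ZMod (2 ^ (a + 1))) ^ a).val = 2 ^ a := by
          have : (2 : ZMod (2 ^ (a + 1))) ^ a = ((2 ^ a : ℕ) : ZMod (2 ^ (a + 1))) := by
            push_cast
            ring
          rw [this, ZMod.val_natCast, Nat.mod_eq_of_lt
            (Nat.pow_lt_pow_right (by norm_num) (lt_add_one a))]
        rw [ZMod.val_add, h2a]
        have hy := ZMod.val_lt (cst x)
        have hc : 0 < 2 ^ a := Nat.pow_pos (by norm_num)
        have hps : 2 ^ (a + 1) = 2 ^ a * 2 := pow_succ 2 a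
        rcases lt_or_ge (cst x).val (2 ^ a) with hlt | hge
        · rw [Nat.mod_eq_of_lt (by omega)]
          omega
        · rw [Nat.mod_eq_sub_mod (by omega), Nat.mod_eq_of_lt (by omega)]
          omega
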